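/- arXiv:1105.4843 — 7 statements merged into one kernel-verified Lean document; each statement's English description precedes it below -/
import Mathlib

section
/- An Archimedean f-algebra E is faithful (i.e., x·y = 0 implies |x| ⊓ |y| = 0 for all x, y ∈ E) if and only if E has no nonzero nilpotent elements. -/
/-- An Archimedean `f`-algebra `E` is faithful (i.e. `x * y = 0` implies
`|x| ⊓ |y| = 0`) if and only if `E` has no nonzero nilpotent elements. -/
theorem stmt_3 {E : Type*} [Ring E] [Lattice E] [Module ℝ E]
    (hadd : ∀ a b c : E, a ≤ b → a + c ≤ b + c)
    (hmulpos : ∀ a b : E, 0 ≤ a → 0 ≤ b → 0 ≤ a * b)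
    (hf : ∀ a x y : E, 0 ≤ a → 0 ≤ x → 0 ≤ y → x ⊓ y = 0 →
      (a * x) ⊓ y = 0 ∧ (x * a) ⊓ y = 0)
    (harch : ∀ x y : E, 0 ≤ x → 0 ≤ y → (∀ n : ℕ, n • x ≤ y) → x = 0) :
    (∀ x y : E, x * y = 0 → |x| ⊓ |y| = 0) ↔
      (∀ x : E, (∃ n : ℕ, 1 ≤ n ∧ x ^ n = 0) → x = 0) := by
  haveI : CovariantClass E E (· + ·) (· ≤ ·) :=
    ⟨fun a b c h => by
      have := hadd b c a h
      simpa [add_comm] using this⟩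
  -- |a| = 0 → a = 0
  have habs0 : ∀ a : E, |a| = 0 → a = 0 := by
    intro a h
    have h1 : a ≤ 0 := by
      calc a ≤ a ⊔ -a := le_sup_left
      _ = 0 := h
    have h2 : -a ≤ 0 := by
      calc -a ≤ a ⊔ -a := le_sup_right
      _ = 0 := h
    have h3 : 0 ≤ a := by simpa using neg_nonpos.mp h2
    exact le_antisymm h1 h3
  constructor
  · -- faithful → semiprime
    intro hfa
    have key : ∀ n : ℕ, ∀ x : E, 1 ≤ n → x ^ n = 0 → x = 0 := by
      intro n
      induction n using Nat.strong_induction_on with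
      | _ n ih =>
        intro x hn hxn
        rcases eq_or_lt_of_le hn with h1 | h2
        · simpa [← h1] using hxn
        · -- n ≥ 2
          set k := (n + 1) / 2 with hk
          have hk1 : 1 ≤ k := Nat.one_le_div_iff (by norm_num) |>.mpr (by omega)
          have hkn : k < n := by omega
          have h2k : n ≤ 2 * k := by omega
          have hsq : x ^ k * x ^ k = 0 := by
            have : x ^ (2 * k) = 0 := by
              have : x ^ (2 * k) = x ^ n * x ^ (2 * k - n) := by
                rw [← pow_add]; congr 1; omega
              rw [this, hxn, zero_mul]
            calc x ^ k * x ^ k = x ^ (2 * k) := by rw [← pow_add]; congr 1; omega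
            _ = 0 := this
          have := hfa (x ^ k) (x ^ k) hsq
          rw [inf_idem] at this
          exact ih k hkn x hk1 (habs0 _ this)
    intro x ⟨n, hn, hxn⟩
    exact key n x hn hxn
  · -- semiprime → faithful
    intro hsp x y hxy
    -- multiplication is monotone on positives
    have hmr : ∀ a b c : E, 0 ≤ c → a ≤ b → a * c ≤ b * c := by
      intro a b c hc hab
      have : 0 ≤ (b - a) * c := hmulpos _ _ (by simpa using sub_nonneg.mpr hab) hc
      have : 0 ≤ b * c - a * c := by rwa [sub_mul] at this
      exact sub_nonneg.mp this
    have hml : ∀ a b c : E, 0 ≤ a → b ≤ c → a * b ≤ a * c := by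
      intro a b c ha hbc
      have : 0 ≤ a * (c - b) := hmulpos _ _ ha (by simpa using sub_nonneg.mpr hbc)
      have : 0 ≤ a * c - a * b := by rwa [mul_sub] at this
      exact sub_nonneg.mp this
    -- sum of disjoint positives
    have hsum : ∀ a b c : E, 0 ≤ a → 0 ≤ b → 0 ≤ c →
        a ⊓ c = 0 → b ⊓ c = 0 → (a + b) ⊓ c = 0 := by
      intro a b c ha hb hc hac hbc
      have h1 : (a + b) ⊓ c ≤ (a + b) ⊓ (a + c) := by
        apply inf_le_inf_left
        calc c = 0 + c := (zero_add c).symm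
        _ ≤ a + c := by exact hadd 0 a c ha
      have h2 : (a + b) ⊓ (a + c) = a + b ⊓ c := (add_inf b c a).symm
      have h3 : (a + b) ⊓ c ≤ a ⊓ c := by
        apply le_inf
        · calc (a + b) ⊓ c ≤ (a + b) ⊓ (a + c) := h1
          _ = a + b ⊓ c := h2
          _ = a := by rw [hbc, add_zero]
        · exact inf_le_right
      have h4 : 0 ≤ (a + b) ⊓ c := le_inf (by
          calc (0:E) = 0 + 0 := (add_zero (0:E)).symm
          _ ≤ a + b := by
            calc 0 + 0 ≤ a + 0 := hadd 0 a 0 ha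
            _ ≤ a + b := by simpa [add_comm] using hadd 0 b a hb) hc
      exact le_antisymm (hac ▸ h3) h4
    -- abbreviations
    set a := x⁺ with ha'
    set b := x⁻ with hb'
    set c := y⁺ with hc'
    set d := y⁻ with hd'
    have hA : 0 ≤ a := posPart_nonneg x
    have hB : 0 ≤ b := negPart_nonneg x
    have hC : 0 ≤ c := posPart_nonneg y
    have hD : 0 ≤ d := negPart_nonneg y
    have hxab : a - b = x := posPart_sub_negPart x
    have hycd : c - d = y := posPart_sub_negPart y
    have hxdis : a ⊓ b = 0 := posPart_inf_negPart_eq_zero x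
    have hydis : c ⊓ d = 0 := posPart_inf_negPart_eq_zero y
    -- the four cross-term disjointnesses
    -- a*c ⊓ a*d = 0
    have d1 : (a * c) ⊓ (a * d) = 0 := by
      have h1 : (a * d) ⊓ c = 0 :=
        (hf a d c hA hD hC (by rwa [inf_comm] at hydis)).1
      exact (hf a c (a * d) hA hC (hmulpos _ _ hA hD)
        (by rwa [inf_comm] at h1)).1
    -- a*c ⊓ b*c = 0
    have d2 : (a * c) ⊓ (b * c) = 0 := by
      have h1 : (b * c) ⊓ a = 0 :=
        (hf c b a hC hB hA (by rwa [inf_comm] at hxdis)).2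
      exact (hf c a (b * c) hC hA (hmulpos _ _ hB hC)
        (by rwa [inf_comm] at h1)).2
    -- b*d ⊓ a*d = 0
    have d3 : (b * d) ⊓ (a * d) = 0 := by
      have h1 : (a * d) ⊓ b = 0 := (hf d a b hD hA hB hxdis).2
      exact (hf d b (a * d) hD hB (hmulpos _ _ hA hD)
        (by rwa [inf_comm] at h1)).2
    -- b*d ⊓ b*c = 0
    have d4 : (b * d) ⊓ (b * c) = 0 := by
      have h1 : (b * c) ⊓ d = 0 := (hf b c d hB hC hD hydis).1
      exact (hf b d (b * c) hB hD (hmulpos _ _ hB hC)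
        (by rwa [inf_comm] at h1)).1
    set P := a * c + b * d with hP
    set N := a * d + b * c with hN
    have hPpos : 0 ≤ P := add_nonneg (hmulpos _ _ hA hC) (hmulpos _ _ hB hD)
    have hNpos : 0 ≤ N := add_nonneg (hmulpos _ _ hA hD) (hmulpos _ _ hB hC)
    have hPN : P ⊓ N = 0 := by
      have e1 : P ⊓ (a * d) = 0 :=
        hsum _ _ _ (hmulpos _ _ hA hC) (hmulpos _ _ hB hD) (hmulpos _ _ hA hD)
          d1 d3
      have e2 : P ⊓ (b * c) = 0 :=
        hsum _ _ _ (hmulpos _ _ hA hC) (hmulpos _ _ hB hD) (hmulpos _ _ hB hC)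
          d2 d4
      have := hsum (a * d) (b * c) P (hmulpos _ _ hA hD) (hmulpos _ _ hB hC)
        hPpos (by rwa [inf_comm] at e1) (by rwa [inf_comm] at e2)
      rwa [inf_comm] at this
    have hPeqN : P = N := by
      have : x * y = P - N := by
        rw [← hxab, ← hycd, hP, hN]; noncomm_ring
      rw [hxy] at this
      exact sub_eq_zero.mp this.symm
    have hP0 : P = 0 := by rw [← hPN, hPeqN, inf_idem]
    -- all four products are zero
    have hac0 : a * c = 0 := by
      have h1 : a * c ≤ P := by
        rw [hP]
        calc a * c = a * c + 0 := (add_zero _).symm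
        _ ≤ a * c + b * d := by
            simpa [add_comm] using hadd 0 (b * d) (a * c) (hmulpos _ _ hB hD)
      exact le_antisymm (hP0 ▸ h1) (hmulpos _ _ hA hC)
    have hbd0 : b * d = 0 := by
      have h1 : b * d ≤ P := by
        rw [hP]
        calc b * d = 0 + b * d := (zero_add _).symm
        _ ≤ a * c + b * d := hadd 0 (a * c) (b * d) (hmulpos _ _ hA hC)
      exact le_antisymm (hP0 ▸ h1) (hmulpos _ _ hB hD)
    have hN0 : N = 0 := by rw [← hPeqN, hP0]
    have had0 : a * d = 0 := by
      have h1 : a * d ≤ N := by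
        rw [hN]
        calc a * d = a * d + 0 := (add_zero _).symm
        _ ≤ a * d + b * c := by
            simpa [add_comm] using hadd 0 (b * c) (a * d) (hmulpos _ _ hB hC)
      exact le_antisymm (hN0 ▸ h1) (hmulpos _ _ hA hD)
    have hbc0 : b * c = 0 := by
      have h1 : b * c ≤ N := by
        rw [hN]
        calc b * c = 0 + b * c := (zero_add _).symm
        _ ≤ a * d + b * c := hadd 0 (a * d) (b * c) (hmulpos _ _ hA hD)
      exact le_antisymm (hN0 ▸ h1) (hmulpos _ _ hB hC)
    -- |x| * |y| = 0
    have habsmul : |x| * |y| = 0 := by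
      have hx' : a + b = |x| := posPart_add_negPart x
      have hy' : c + d = |y| := posPart_add_negPart y
      calc |x| * |y| = (a + b) * (c + d) := by rw [hx', hy']
      _ = a * c + a * d + b * c + b * d := by noncomm_ring
      _ = 0 := by rw [hac0, had0, hbc0, hbd0]; abel
    -- conclude: m := |x| ⊓ |y| satisfies m^2 = 0
    set m := |x| ⊓ |y| with hm
    have hm0 : 0 ≤ m := le_inf (abs_nonneg x) (abs_nonneg y)
    have hmsq : m * m = 0 := by
      have h1 : m * m ≤ |x| * m := hmr m |x| m hm0 inf_le_left
      have h2 : |x| * m ≤ |x| * |y| := hml |x| m |y| (abs_nonneg x) inf_le_right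
      have : m * m ≤ 0 := by rw [← habsmul]; exact le_trans h1 h2
      exact le_antisymm this (hmulpos _ _ hm0 hm0)
    exact hsp m ⟨2, by norm_num, by rw [pow_two]; exact hmsq⟩
end

section
/- An Archimedean f-algebra E is faithful if and only if there is no strictly positive element of E with zero square, i.e. for every x > 0 one has x² ≠ 0. -/
/-- An Archimedean `f`-algebra `E` is faithful (i.e. `x * y = 0` implies
`|x| ⊓ |y| = 0`) if and only if there is no strictly positive element with zero square. -/
theorem stmt_4 {E : Type*} [Ring E] [Lattice E] [Module ℝ E]
    (hadd : ∀ a b c : E, a ≤ b → a + c ≤ b + c)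
    (hmulpos : ∀ a b : E, 0 ≤ a → 0 ≤ b → 0 ≤ a * b)
    (hf : ∀ a x y : E, 0 ≤ a → 0 ≤ x → 0 ≤ y → x ⊓ y = 0 →
      (a * x) ⊓ y = 0 ∧ (x * a) ⊓ y = 0)
    (harch : ∀ x y : E, 0 ≤ x → 0 ≤ y → (∀ n : ℕ, n • x ≤ y) → x = 0) :
    (∀ x y : E, x * y = 0 → |x| ⊓ |y| = 0) ↔
      (∀ x : E, 0 < x → x * x ≠ 0) := by
  haveI : AddLeftMono E := ⟨fun a b c h => by
    simpa [add_comm] using hadd b c a h⟩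
  haveI : AddRightMono E := ⟨fun a b c h => hadd b c a h⟩
  -- a positive element whose square is zero is zero
  constructor
  · intro hfaith x hx hsq
    have h0 : |x| ⊓ |x| = 0 := hfaith x x hsq
    rw [inf_idem] at h0
    have : x ≤ (0 : E) := h0 ▸ le_abs_self x
    exact absurd (le_antisymm this hx.le) (by simpa using hx.ne')
  · intro hsp x y hxy
    -- notation for positive/negative parts
    set xp := x⁺ with hxp'
    set xn := x⁻ with hxn'
    set yp := y⁺ with hyp'
    set yn := y⁻ with hyn'
    have hxp : (0:E) ≤ xp := posPart_nonneg x
    have hxn : (0:E) ≤ xn := negPart_nonneg x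
    have hyp : (0:E) ≤ yp := posPart_nonneg y
    have hyn : (0:E) ≤ yn := negPart_nonneg y
    have hxd : xp ⊓ xn = 0 := posPart_inf_negPart_eq_zero x
    have hyd : yp ⊓ yn = 0 := posPart_inf_negPart_eq_zero y
    -- pairwise disjointness of the four products
    have d1 : (xp * yp) ⊓ (xp * yn) = 0 := by
      have h1 : (xp * yp) ⊓ yn = 0 := (hf xp yp yn hxp hyp hyn hyd).1
      have h2 : yn ⊓ (xp * yp) = 0 := by rwa [inf_comm] at h1
      have h3 : (xp * yn) ⊓ (xp * yp) = 0 :=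
        (hf xp yn (xp * yp) hxp hyn (hmulpos _ _ hxp hyp) h2).1
      rwa [inf_comm] at h3
    have d2 : (xp * yp) ⊓ (xn * yp) = 0 := by
      have hxd' : xn ⊓ xp = 0 := by rwa [inf_comm] at hxd
      have h1 : (xn * yp) ⊓ xp = 0 := (hf yp xn xp hyp hxn hxp hxd').2
      have h2 : xp ⊓ (xn * yp) = 0 := by rwa [inf_comm] at h1
      exact (hf yp xp (xn * yp) hyp hxp (hmulpos _ _ hxn hyp) h2).2
    have d3 : (xn * yn) ⊓ (xp * yn) = 0 := by
      have h1 : (xp * yn) ⊓ xn = 0 := (hf yn xp xn hyn hxp hxn hxd).2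
      have h2 : xn ⊓ (xp * yn) = 0 := by rwa [inf_comm] at h1
      exact (hf yn xn (xp * yn) hyn hxn (hmulpos _ _ hxp hyn) h2).2
    have d4 : (xn * yn) ⊓ (xn * yp) = 0 := by
      have hyd' : yn ⊓ yp = 0 := by rwa [inf_comm] at hyd
      have h1 : (xn * yn) ⊓ yp = 0 := (hf xn yn yp hxn hyn hyp hyd').1
      have h2 : yp ⊓ (xn * yn) = 0 := by rwa [inf_comm] at h1
      have h3 : (xn * yp) ⊓ (xn * yn) = 0 :=
        (hf xn yp (xn * yn) hxn hyp (hmulpos _ _ hxn hyn) h2).1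
      rwa [inf_comm] at h3
    -- (a + b) ⊓ m = 0 whenever a, b, m ≥ 0 and a ⊓ m = b ⊓ m = 0
    have key : ∀ a b m : E, 0 ≤ a → 0 ≤ b → 0 ≤ m → a ⊓ m = 0 → b ⊓ m = 0 →
        (a + b) ⊓ m = 0 := by
      intro a b m ha hb hm ham hbm
      refine le_antisymm ?_ (le_inf (add_nonneg ha hb) hm)
      · calc (a + b) ⊓ m ≤ (m ⊓ a) + (m ⊓ b) := by
              have e1 : (m ⊓ a) + (m ⊓ b) = ((m ⊓ a) + m) ⊓ ((m ⊓ a) + b) := add_inf _ _ _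
              have e2 : ((m ⊓ a) + m) ⊓ ((m ⊓ a) + b)
                  = ((m + m) ⊓ (a + m)) ⊓ ((m + b) ⊓ (a + b)) := by
                rw [inf_add, inf_add]
              rw [e1, e2]
              refine le_inf (le_inf ?_ ?_) (le_inf ?_ ?_)
              · exact inf_le_right.trans (by simpa using add_le_add_left hm m)
              · exact inf_le_right.trans (by simpa using add_le_add_right ha m)
              · exact inf_le_right.trans (by simpa using add_le_add_left hb m)
              · exact inf_le_left
            _ = 0 := by rw [inf_comm m a, ham, inf_comm m b, hbm, add_zero]
    -- the two positive parts of x*y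
    set P := xp * yp + xn * yn with hP
    set Q := xp * yn + xn * yp with hQ
    have hPpos : (0:E) ≤ P := add_nonneg (hmulpos _ _ hxp hyp) (hmulpos _ _ hxn hyn)
    have hQpos : (0:E) ≤ Q := add_nonneg (hmulpos _ _ hxp hyn) (hmulpos _ _ hxn hyp)
    have hPQ : P ⊓ Q = 0 := by
      have hA : (xp * yn + xn * yp) ⊓ (xp * yp) = 0 := by
        refine key _ _ _ (hmulpos _ _ hxp hyn) (hmulpos _ _ hxn hyp)
          (hmulpos _ _ hxp hyp) ?_ ?_
        · rwa [inf_comm] at d1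
        · rwa [inf_comm] at d2
      have hB : (xp * yn + xn * yp) ⊓ (xn * yn) = 0 := by
        refine key _ _ _ (hmulpos _ _ hxp hyn) (hmulpos _ _ hxn hyp)
          (hmulpos _ _ hxn hyn) ?_ ?_
        · rwa [inf_comm] at d3
        · rwa [inf_comm] at d4
      have := key (xp * yp) (xn * yn) Q (hmulpos _ _ hxp hyp) (hmulpos _ _ hxn hyn)
        hQpos (by rwa [inf_comm] at hA) (by rwa [inf_comm] at hB)
      exact this
    -- x*y = P - Q
    have hxy' : P - Q = 0 := by
      have ex : xp - xn = x := posPart_sub_negPart x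
      have ey : yp - yn = y := posPart_sub_negPart y
      have : (xp - xn) * (yp - yn) = 0 := by rw [ex, ey]; exact hxy
      rw [hP, hQ]
      rw [mul_sub, sub_mul, sub_mul] at this
      abel_nf
      abel_nf at this
      linear_combination (norm := abel) this
    have hPQeq : P = Q := by rwa [sub_eq_zero] at hxy'
    have hP0 : P = 0 := by rw [← hPQ, hPQeq, inf_idem]
    have hQ0 : Q = 0 := hPQeq ▸ hP0
    -- hence |x| * |y| = 0
    have habs : |x| * |y| = 0 := by
      have ex : xp + xn = |x| := posPart_add_negPart x
      have ey : yp + yn = |y| := posPart_add_negPart y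
      have : (xp + xn) * (yp + yn) = P + Q := by
        rw [hP, hQ, add_mul, mul_add, mul_add]; abel
      rw [← ex, ← ey, this, hP0, hQ0, add_zero]
    -- let a = |x| ⊓ |y| and show a * a = 0
    set a := |x| ⊓ |y| with ha
    have hapos : (0:E) ≤ a := le_inf (abs_nonneg x) (abs_nonneg y)
    have h1 : a * a ≤ a * |y| := by
      have := hmulpos a (|y| - a) hapos (by rw [sub_nonneg]; exact inf_le_right)
      rw [mul_sub] at this
      exact sub_nonneg.mp this
    have h2 : a * |y| ≤ |x| * |y| := by
      have := hmulpos (|x| - a) (|y|) (by rw [sub_nonneg]; exact inf_le_left) (abs_nonneg y)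
      rw [sub_mul] at this
      exact sub_nonneg.mp this
    have hsq : a * a = 0 :=
      le_antisymm (h1.trans (h2.trans_eq habs)) (hmulpos a a hapos hapos)
    by_contra hne
    exact hsp a (lt_of_le_of_ne hapos (fun h => hne (ha ▸ h.symm))) hsq
end

section
/- Let Q be a topological space, Λ a dense subset of ℝ, and λ ↦ G_λ an increasing map from Λ into the power set of Q. Then there exists a unique continuous function f : Q → ℝ ∪ {±∞} (with the order topology on the extended reals) satisfying {f < λ} ⊆ G_λ ⊆ {f ≤ λ} for all λ ∈ Λ if and only if for all λ, μ ∈ Λ with λ < μ, the closure of G_λ is contained in the interior of G_μ. -/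
section Aux

variable {Q : Type*} [TopologicalSpace Q] (Λ : Set ℝ) (G : ℝ → Set Q)

/-- Auxiliary function: infimum of levels containing `q`. -/
noncomputable def auxF (q : Q) : EReal :=
  sInf ((fun l : ℝ => (l : EReal)) '' {l | l ∈ Λ ∧ q ∈ G l})

lemma auxF_le {q : Q} {l : ℝ} (hl : l ∈ Λ) (hq : q ∈ G l) :
    auxF Λ G q ≤ (l : EReal) :=
  sInf_le ⟨l, ⟨hl, hq⟩, rfl⟩

lemma exists_of_auxF_lt {q : Q} {a : EReal} (h : auxF Λ G q < a) :
    ∃ l ∈ Λ, (l : EReal) < a ∧ q ∈ G l := by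
  obtain ⟨x, hx, hxa⟩ := sInf_lt_iff.1 h
  obtain ⟨l, ⟨hl, hq⟩, rfl⟩ := hx
  exact ⟨l, hl, hxa, hq⟩

lemma le_auxF (hmono : ∀ l m : ℝ, l ∈ Λ → m ∈ Λ → l ≤ m → G l ⊆ G m)
    {q : Q} {l : ℝ} (hl : l ∈ Λ) (hq : q ∉ G l) :
    (l : EReal) ≤ auxF Λ G q := by
  refine le_sInf ?_
  rintro x ⟨m, ⟨hm, hqm⟩, rfl⟩
  by_contra hlt
  push_neg at hlt
  exact hq (hmono m l hm hl (le_of_lt (by exact_mod_cast hlt)) hqm)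

end Aux

/-- Let `Q` be a topological space, `Λ` a dense subset of `ℝ`, and `λ ↦ G λ` an
increasing map from `Λ` into the power set of `Q`.  There exists a unique
continuous `f : Q → ℝ ∪ {±∞}` with `{f < λ} ⊆ G λ ⊆ {f ≤ λ}` for all `λ ∈ Λ`
iff for all `λ < μ` in `Λ`, `closure (G λ) ⊆ interior (G μ)`. -/
theorem stmt_7 {Q : Type*} [TopologicalSpace Q] (Λ : Set ℝ) (hΛ : Dense Λ)
    (G : ℝ → Set Q)
    (hmono : ∀ l m : ℝ, l ∈ Λ → m ∈ Λ → l ≤ m → G l ⊆ G m) :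
    (∃! f : Q → EReal, Continuous f ∧
        ∀ l ∈ Λ, {q | f q < (l : EReal)} ⊆ G l ∧ G l ⊆ {q | f q ≤ (l : EReal)}) ↔
      (∀ l m : ℝ, l ∈ Λ → m ∈ Λ → l < m → closure (G l) ⊆ interior (G m)) := by
  constructor
  · rintro ⟨f, ⟨hf, hfG⟩, -⟩ l m hl hm hlm
    have h1 : closure (G l) ⊆ {q | f q ≤ (l : EReal)} :=
      closure_minimal (hfG l hl).2 (isClosed_le hf continuous_const)
    have h2 : {q | f q ≤ (l : EReal)} ⊆ {q | f q < (m : EReal)} := fun q hq =>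
      show f q < (m : EReal) from
        lt_of_le_of_lt hq (show (l : EReal) < (m : EReal) by exact_mod_cast hlm)
    exact fun q hq => interior_maximal (hfG m hm).1
      (isOpen_lt hf continuous_const) (h2 (h1 hq))
  · intro hcl
    set f := auxF Λ G with hfdef
    -- the two defining inclusions
    have hprop : ∀ l ∈ Λ, {q | f q < (l : EReal)} ⊆ G l ∧ G l ⊆ {q | f q ≤ (l : EReal)} := by
      intro l hl
      constructor
      · intro q hq
        obtain ⟨m, hm, hml, hqm⟩ := exists_of_auxF_lt Λ G hq
        exact hmono m l hm hl (le_of_lt (by exact_mod_cast hml)) hqm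
      · intro q hq
        exact auxF_le Λ G hl hq
    -- continuity
    have hcont : Continuous f := by
      rw [(OrderTopology.topology_eq_generate_intervals (α := EReal)),
        continuous_generateFrom_iff]
      rintro s ⟨a, rfl | rfl⟩
      · -- preimage of Ioi a open
        rw [isOpen_iff_forall_mem_open]
        intro q hq
        simp only [Set.mem_preimage, Set.mem_Ioi] at hq
        obtain ⟨r1, har1, hr1f⟩ := EReal.lt_iff_exists_real_btwn.1 hq
        obtain ⟨r2, hr12, hr2f⟩ := EReal.lt_iff_exists_real_btwn.1 hr1f
        have hr12' : r1 < r2 := by exact_mod_cast hr12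
        obtain ⟨l', hl', hl'mem⟩ := hΛ.exists_between hr12'
        obtain ⟨l, hl, hlmem⟩ := hΛ.exists_between hl'mem.2
        refine ⟨(closure (G l'))ᶜ, ?_, isClosed_closure.isOpen_compl, ?_⟩
        · intro x hx
          simp only [Set.mem_compl_iff, Set.mem_preimage, Set.mem_Ioi]
          have : (l' : EReal) ≤ f x :=
            le_auxF Λ G hmono hl' (fun h => hx (subset_closure h))
          calc a < (r1 : EReal) := har1
            _ < (l' : EReal) := by exact_mod_cast hl'mem.1
            _ ≤ f x := this
        · -- q ∉ closure (G l')
          simp only [Set.mem_compl_iff]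
          intro hqc
          have hq1 : q ∈ interior (G l) := hcl l' l hl' hl hlmem.1 hqc
          have hq2 : q ∈ G l := interior_subset hq1
          have : f q ≤ (l : EReal) := auxF_le Λ G hl hq2
          have hlt : (l : EReal) < f q :=
            lt_trans (show (l : EReal) < (r2 : EReal) by exact_mod_cast hlmem.2) hr2f
          exact absurd (lt_of_le_of_lt this hlt) (lt_irrefl _)
      · -- preimage of Iio a open
        rw [isOpen_iff_forall_mem_open]
        intro q hq
        simp only [Set.mem_preimage, Set.mem_Iio] at hq
        obtain ⟨l, hl, hla, hql⟩ := exists_of_auxF_lt Λ G hq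
        obtain ⟨r, hlr, hra⟩ := EReal.lt_iff_exists_real_btwn.1 hla
        have hlr' : l < r := by exact_mod_cast hlr
        obtain ⟨m, hm, hmmem⟩ := hΛ.exists_between hlr'
        refine ⟨interior (G m), ?_, isOpen_interior, ?_⟩
        · intro x hx
          simp only [Set.mem_preimage, Set.mem_Iio]
          have : f x ≤ (m : EReal) := auxF_le Λ G hm (interior_subset hx)
          calc f x ≤ (m : EReal) := this
            _ < (r : EReal) := by exact_mod_cast hmmem.2
            _ < a := hra
        · exact hcl l m hl hm hmmem.1 (subset_closure hql)
    refine ⟨f, ⟨hcont, hprop⟩, ?_⟩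
    -- uniqueness
    rintro g ⟨-, hg⟩
    funext q
    by_contra hne
    rcases lt_or_gt_of_ne hne with h | h
    · obtain ⟨r, h1, h2⟩ := EReal.lt_iff_exists_real_btwn.1 h
      obtain ⟨r', h1', h2'⟩ := EReal.lt_iff_exists_real_btwn.1 h2
      have hrr' : r < r' := by exact_mod_cast h1'
      obtain ⟨l, hl, hlmem⟩ := hΛ.exists_between hrr'
      have hq1 : q ∈ G l := (hg l hl).1 <|
        show g q < (l : EReal) from
          lt_trans h1 (show (r : EReal) < (l : EReal) by exact_mod_cast hlmem.1)
      have hq2 : f q ≤ (l : EReal) := (hprop l hl).2 hq1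
      have hlt : (l : EReal) < f q :=
        lt_trans (show (l : EReal) < (r' : EReal) by exact_mod_cast hlmem.2) h2'
      exact absurd (lt_of_le_of_lt hq2 hlt) (lt_irrefl _)
    · obtain ⟨r, h1, h2⟩ := EReal.lt_iff_exists_real_btwn.1 h
      obtain ⟨r', h1', h2'⟩ := EReal.lt_iff_exists_real_btwn.1 h2
      have hrr' : r < r' := by exact_mod_cast h1'
      obtain ⟨l, hl, hlmem⟩ := hΛ.exists_between hrr'
      have hq1 : q ∈ G l := (hprop l hl).1 <|
        show f q < (l : EReal) from
          lt_trans h1 (show (r : EReal) < (l : EReal) by exact_mod_cast hlmem.1)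
      have hq2 : g q ≤ (l : EReal) := (hg l hl).2 hq1
      have hlt : (l : EReal) < g q :=
        lt_trans (show (l : EReal) < (r' : EReal) by exact_mod_cast hlmem.2) h2'
      exact absurd (lt_of_le_of_lt hq2 hlt) (lt_irrefl _)
end

section
/- Let Q be a quasi-extremally disconnected compact Hausdorff space, Q₀ ⊆ Q an open dense Fσ subset, and f₀ : Q₀ → ℝ ∪ {±∞} a continuous function. Then there exists a unique continuous function f : Q → ℝ ∪ {±∞} such that f(q) = f₀(q) for all q ∈ Q₀. -/
open Set Topology TopologicalSpace


/-- An `Fσ` set is a countable union of closed sets. -/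
def IsFsigma {Q : Type*} [TopologicalSpace Q] (s : Set Q) : Prop :=
  ∃ T : ℕ → Set Q, (∀ n, IsClosed (T n)) ∧ s = ⋃ n, T n

lemma isFsigma_iUnion {Q : Type*} [TopologicalSpace Q] {S : ℕ → Set Q}
    (h : ∀ n, IsFsigma (S n)) : IsFsigma (⋃ n, S n) := by
  choose T hT hST using h
  refine ⟨fun k => T k.unpair.1 k.unpair.2, fun k => hT _ _, ?_⟩
  rw [Set.iUnion_unpair]
  exact Set.iUnion_congr hST

lemma isFsigma_empty {Q : Type*} [TopologicalSpace Q] : IsFsigma (∅ : Set Q) :=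
  ⟨fun _ => ∅, fun _ => isClosed_empty, by simp⟩

/-- Let `Q` be a quasi-extremally disconnected compact Hausdorff space, `Q₀ ⊆ Q`
an open dense `Fσ` subset, and `f₀ : Q₀ → ℝ ∪ {±∞}` continuous.  Then there is a
unique continuous `f : Q → ℝ ∪ {±∞}` extending `f₀`. -/
theorem stmt_8 {Q : Type*} [TopologicalSpace Q] [CompactSpace Q] [T2Space Q]
    (hqed : ∀ U : Set Q, IsOpen U → IsFsigma U → IsOpen (closure U))
    (Q₀ : Set Q) (hopen : IsOpen Q₀) (hdense : Dense Q₀) (hFσ : IsFsigma Q₀)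
    (f₀ : Q₀ → EReal) (hf₀ : Continuous f₀) :
    ∃! f : Q → EReal, Continuous f ∧ ∀ q : Q₀, f q = f₀ q := by
  classical
  obtain ⟨T, hTc, hTU⟩ := hFσ
  -- images of closed subsets of Q₀ are Fσ in Q
  have key : ∀ C : Set Q₀, IsClosed C → IsFsigma (Subtype.val '' C) := by
    intro C hC
    obtain ⟨C', hC', rfl⟩ := isClosed_induced_iff.mp hC
    refine ⟨fun n => C' ∩ T n, fun n => hC'.inter (hTc n), ?_⟩
    rw [Subtype.image_preimage_coe, Set.inter_comm, hTU, Set.inter_iUnion]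
  obtain ⟨e, he⟩ := exists_surjective_nat ℚ
  -- the open Fσ sets
  set S : ℚ → Set Q := fun r => Subtype.val '' (f₀ ⁻¹' (Set.Ioi ((r : ℝ) : EReal))) with hS
  have hSopen : ∀ r, IsOpen (S r) :=
    fun r => hopen.isOpenMap_subtype_val _ (isOpen_Ioi.preimage hf₀)
  have hSF : ∀ r, IsFsigma (S r) := by
    intro r
    have : S r = ⋃ n, (if r < e n then
        Subtype.val '' (f₀ ⁻¹' (Set.Ici ((e n : ℝ) : EReal))) else ∅) := by
      ext q
      simp only [Set.mem_iUnion]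
      constructor
      · rintro ⟨x, hx, rfl⟩
        obtain ⟨s, hrs, hsf⟩ := EReal.exists_rat_btwn_of_lt hx
        obtain ⟨n, rfl⟩ := he s
        refine ⟨n, ?_⟩
        have hrs' : r < e n := by exact_mod_cast EReal.coe_lt_coe_iff.mp hrs
        rw [if_pos hrs']
        exact ⟨x, le_of_lt hsf, rfl⟩
      · rintro ⟨n, hn⟩
        split_ifs at hn with h
        · obtain ⟨x, hx, rfl⟩ := hn
          refine ⟨x, ?_, rfl⟩
          have : ((r : ℝ) : EReal) < ((e n : ℝ) : EReal) := by exact_mod_cast h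
          exact lt_of_lt_of_le this hx
        · exact absurd hn (Set.notMem_empty _)
    rw [this]
    refine isFsigma_iUnion fun n => ?_
    split_ifs
    · exact key _ (isClosed_Ici.preimage hf₀)
    · exact isFsigma_empty
  set V : ℚ → Set Q := fun r => closure (S r) with hV
  have hVopen : ∀ r, IsOpen (V r) := fun r => hqed _ (hSopen r) (hSF r)
  have hVclosed : ∀ r, IsClosed (V r) := fun r => isClosed_closure
  have hVmono : ∀ {r s : ℚ}, r ≤ s → V s ⊆ V r := by
    intro r s hrs
    refine closure_mono (Set.image_mono (Set.preimage_mono (Set.Ioi_subset_Ioi ?_)))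
    exact_mod_cast hrs
  -- key facts
  have K1 : ∀ (x : Q₀) (r : ℚ), (x : Q) ∈ V r → ((r : ℝ) : EReal) ≤ f₀ x := by
    intro x r hx
    have hx' : x ∈ closure (f₀ ⁻¹' (Set.Ioi ((r : ℝ) : EReal))) := by
      rw [IsEmbedding.subtypeVal.closure_eq_preimage_closure_image]
      exact hx
    have h2 : closure (f₀ ⁻¹' (Set.Ioi ((r : ℝ) : EReal))) ⊆
        f₀ ⁻¹' closure (Set.Ioi ((r : ℝ) : EReal)) := hf₀.closure_preimage_subset _
    have h3 : closure (Set.Ioi ((r : ℝ) : EReal)) = Set.Ici ((r : ℝ) : EReal) :=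
      closure_Ioi' ⟨⊤, EReal.coe_lt_top _⟩
    have := h2 hx'
    rw [h3] at this
    exact this
  have K2 : ∀ (x : Q₀) (r : ℚ), ((r : ℝ) : EReal) < f₀ x → (x : Q) ∈ V r := by
    intro x r hx
    exact subset_closure ⟨x, hx, rfl⟩
  set f : Q → EReal := fun q => sSup {y : EReal | ∃ r : ℚ, ((r : ℝ) : EReal) = y ∧ q ∈ V r}
    with hf
  have hagree : ∀ x : Q₀, f x = f₀ x := by
    intro x
    apply le_antisymm
    · apply sSup_le
      rintro y ⟨r, rfl, hy⟩
      exact K1 x r hy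
    · refine le_of_forall_lt fun c hc => ?_
      obtain ⟨r, hcr, hrf⟩ := EReal.exists_rat_btwn_of_lt hc
      exact lt_of_lt_of_le hcr (le_sSup ⟨r, rfl, K2 x r hrf⟩)
  have hIoi : ∀ a : EReal, IsOpen (f ⁻¹' Set.Ioi a) := by
    intro a
    have : f ⁻¹' Set.Ioi a = ⋃ r : ℚ, (if a < ((r : ℝ) : EReal) then V r else ∅) := by
      ext q
      simp only [Set.mem_preimage, Set.mem_Ioi, Set.mem_iUnion, hf, lt_sSup_iff]
      constructor
      · rintro ⟨y, ⟨r, rfl, hr⟩, hy⟩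
        exact ⟨r, by rw [if_pos hy]; exact hr⟩
      · rintro ⟨r, hr⟩
        split_ifs at hr with h
        · exact ⟨_, ⟨r, rfl, hr⟩, h⟩
        · exact absurd hr (Set.notMem_empty _)
    rw [this]
    exact isOpen_iUnion fun r => by split_ifs; exacts [hVopen r, isOpen_empty]
  have hIio : ∀ a : EReal, IsOpen (f ⁻¹' Set.Iio a) := by
    intro a
    have : f ⁻¹' Set.Iio a = ⋃ r : ℚ, (if ((r : ℝ) : EReal) < a then (V r)ᶜ else ∅) := by
      ext q
      simp only [Set.mem_preimage, Set.mem_Iio, Set.mem_iUnion]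
      constructor
      · intro hq
        obtain ⟨r, hfr, hra⟩ := EReal.exists_rat_btwn_of_lt hq
        refine ⟨r, ?_⟩
        rw [if_pos hra]
        intro hmem
        exact absurd (le_sSup (s := {y : EReal | ∃ r : ℚ, ((r : ℝ) : EReal) = y ∧ q ∈ V r})
          ⟨r, rfl, hmem⟩) (not_le_of_gt hfr)
      · rintro ⟨r, hr⟩
        split_ifs at hr with h
        · refine lt_of_le_of_lt ?_ h
          apply sSup_le
          rintro y ⟨s, rfl, hs⟩
          by_contra hcon
          push_neg at hcon
          have hrs : r ≤ s := by
            have := EReal.coe_lt_coe_iff.mp hcon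
            exact_mod_cast le_of_lt this
          exact hr (hVmono hrs hs)
        · exact absurd hr (Set.notMem_empty _)
    rw [this]
    exact isOpen_iUnion fun r => by
      split_ifs; exacts [(hVclosed r).isOpen_compl, isOpen_empty]
  have hcont : Continuous f := by
    rw [(OrderTopology.topology_eq_generate_intervals (α := EReal) :
      (inferInstance : TopologicalSpace EReal) = _)]
    refine continuous_generateFrom_iff.mpr ?_
    rintro s ⟨a, rfl | rfl⟩
    · exact hIoi a
    · exact hIio a
  refine ⟨f, ⟨hcont, hagree⟩, ?_⟩
  rintro g ⟨hgc, hg⟩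
  refine Continuous.ext_on hdense hgc hcont ?_
  intro q hq
  have := hg ⟨q, hq⟩
  have := hagree ⟨q, hq⟩
  simp only at *
  rw [hg ⟨q, hq⟩ ] at *
  exact (hagree ⟨q, hq⟩).symm ▸ rfl
end

section
/- Let Q be a topological space and f, g : Q → ℝ ∪ {±∞} continuous functions each taking the values ±∞ only on a nowhere dense set. Then the set Q₀ = {q : |f(q)| < ∞} ∩ {q : |g(q)| < ∞} is an open dense subset of Q, and if Q is quasi-extremally disconnected compact Hausdorff there is a unique continuous h : Q → ℝ ∪ {±∞} with h(q) = f(q) + g(q) for all q ∈ Q₀. -/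
open Set Topology

section Aux

lemma aux_nd_union {X : Type*} [TopologicalSpace X] {s t : Set X}
    (hs : IsNowhereDense s) (ht : IsNowhereDense t) : IsNowhereDense (s ∪ t) := by
  rw [IsNowhereDense, closure_union]
  have hU : IsOpen (interior (closure s ∪ closure t)) := isOpen_interior
  have h1 : interior (closure s ∪ closure t) \ closure s ⊆ interior (closure t) := by
    apply interior_maximal _ (hU.sdiff isClosed_closure)
    intro x hx
    rcases interior_subset hx.1 with h | h
    · exact absurd h hx.2
    · exact h
  rw [ht] at h1
  have h2 : interior (closure s ∪ closure t) ⊆ closure s := by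
    intro x hx
    by_contra hxs
    exact h1 ⟨hx, hxs⟩
  have h3 : interior (closure s ∪ closure t) ⊆ interior (closure s) :=
    interior_maximal h2 hU
  rw [hs] at h3
  exact subset_empty_iff.1 h3

lemma aux_ereal_approx {x : EReal} {c : ℝ} (h : x < (c : EReal)) :
    ∃ n : ℕ, x ≤ (((c - 1/(n+1) : ℝ)) : EReal) := by
  induction x with
  | bot => exact ⟨0, bot_le⟩
  | coe y =>
    have hy : y < c := EReal.coe_lt_coe_iff.1 h
    obtain ⟨n, hn⟩ := exists_nat_one_div_lt (sub_pos.2 hy)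
    exact ⟨n, EReal.coe_le_coe_iff.2 (by linarith)⟩
  | top => exact absurd h (not_top_lt)

variable {Q : Type*} [TopologicalSpace Q] (f g : Q → EReal)

/-- The open set corresponding to `{f + g < r}`. -/
def Vaux (r : ℚ) : Set Q :=
  ⋃ (a : ℚ) (b : ℚ) (_ : a + b < r),
    {q | f q < ((a : ℝ) : EReal)} ∩ {q | g q < ((b : ℝ) : EReal)}

lemma mem_Vaux {r : ℚ} {q : Q} :
    q ∈ Vaux f g r ↔ ∃ a b : ℚ, a + b < r ∧ f q < ((a:ℝ):EReal) ∧ g q < ((b:ℝ):EReal) := by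
  simp only [Vaux, Set.mem_iUnion, Set.mem_inter_iff, Set.mem_setOf_eq]
  constructor
  · rintro ⟨a, b, hab, h1, h2⟩
    exact ⟨a, b, hab, h1, h2⟩
  · rintro ⟨a, b, hab, h1, h2⟩
    exact ⟨a, b, hab, h1, h2⟩

lemma Vaux_mono {r s : ℚ} (h : r ≤ s) : Vaux f g r ⊆ Vaux f g s := by
  intro q hq
  rw [mem_Vaux] at hq ⊢
  obtain ⟨a, b, hab, h1, h2⟩ := hq
  exact ⟨a, b, lt_of_lt_of_le hab h, h1, h2⟩

lemma isOpen_Vaux (hf : Continuous f) (hg : Continuous g) (r : ℚ) : IsOpen (Vaux f g r) := by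
  apply isOpen_iUnion; intro a; apply isOpen_iUnion; intro b; apply isOpen_iUnion; intro _
  exact ((isOpen_Iio.preimage hf)).inter (isOpen_Iio.preimage hg)

set_option maxHeartbeats 1000000 in
lemma isFsigma_Vaux (hf : Continuous f) (hg : Continuous g) (r : ℚ) :
    IsFsigma (Vaux f g r) := by
  classical
  set F : ℚ × ℚ × ℕ → Set Q := fun p =>
    if p.1 + p.2.1 < r then
      {q | f q ≤ (((p.1 : ℝ) - 1/(p.2.2+1) : ℝ) : EReal)} ∩
      {q | g q ≤ (((p.2.1 : ℝ) - 1/(p.2.2+1) : ℝ) : EReal)}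
    else ∅ with hF
  refine ⟨fun n => F (Denumerable.ofNat (ℚ × ℚ × ℕ) n), fun n => ?_, ?_⟩
  · rw [hF]
    dsimp only
    split
    · exact (isClosed_Iic.preimage hf).inter (isClosed_Iic.preimage hg)
    · exact isClosed_empty
  · ext q
    simp only [Set.mem_iUnion]
    constructor
    · intro hq
      rw [mem_Vaux] at hq
      obtain ⟨a, b, hab, h1, h2⟩ := hq
      obtain ⟨n₁, hn₁⟩ := aux_ereal_approx h1
      obtain ⟨n₂, hn₂⟩ := aux_ereal_approx h2
      set n := max n₁ n₂ with hn
      have hmono : ∀ (c : ℝ) (m k : ℕ), m ≤ k →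
          ((c - 1/(m+1) : ℝ) : EReal) ≤ ((c - 1/(k+1) : ℝ) : EReal) := by
        intro c m k hmk
        apply EReal.coe_le_coe_iff.2
        have : (1 : ℝ)/(k+1) ≤ 1/(m+1) := by
          apply one_div_le_one_div_of_le
          · positivity
          · push_cast; linarith [(Nat.cast_le (α := ℝ)).2 hmk]
        linarith
      obtain ⟨m, hm⟩ : ∃ m, Denumerable.ofNat (ℚ × ℚ × ℕ) m = (a, b, n) :=
        (Denumerable.eqv (ℚ × ℚ × ℕ)).symm.surjective (a, b, n)
      refine ⟨m, ?_⟩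
      rw [hm, hF]
      simp only [if_pos hab]
      exact ⟨le_trans hn₁ (hmono _ n₁ n (le_max_left _ _)),
             le_trans hn₂ (hmono _ n₂ n (le_max_right _ _))⟩
    · rintro ⟨m, hm⟩
      rcases hp : Denumerable.ofNat (ℚ × ℚ × ℕ) m with ⟨a, b, n⟩
      rw [hp, hF] at hm
      by_cases hab : a + b < r
      · simp only [if_pos hab] at hm
        rw [mem_Vaux]
        have hpos : (0:ℝ) < 1/(n+1) := by positivity
        refine ⟨a, b, hab, ?_, ?_⟩
        · exact lt_of_le_of_lt hm.1 (EReal.coe_lt_coe_iff.2 (by linarith))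
        · exact lt_of_le_of_lt hm.2 (EReal.coe_lt_coe_iff.2 (by linarith))
      · simp only [if_neg hab] at hm
        exact absurd hm (Set.notMem_empty q)

/-- The candidate extension of `f + g`. -/
noncomputable def Haux (q : Q) : EReal :=
  ⨅ (r : ℚ) (_ : q ∈ closure (Vaux f g r)), ((r : ℝ) : EReal)

lemma Haux_lt_iff {q : Q} {t : EReal} :
    Haux f g q < t ↔ ∃ r : ℚ, ((r:ℝ):EReal) < t ∧ q ∈ closure (Vaux f g r) := by
  rw [Haux]
  rw [iInf_lt_iff]
  constructor
  · rintro ⟨r, hr⟩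
    rw [iInf_lt_iff] at hr
    obtain ⟨hmem, hlt⟩ := hr
    exact ⟨r, hlt, hmem⟩
  · rintro ⟨r, hlt, hmem⟩
    exact ⟨r, by rw [iInf_lt_iff]; exact ⟨hmem, hlt⟩⟩

lemma Haux_le_of_mem {q : Q} {r : ℚ} (h : q ∈ closure (Vaux f g r)) :
    Haux f g q ≤ ((r:ℝ):EReal) := by
  exact iInf₂_le r h

lemma le_Haux_of_not_mem {q : Q} {r : ℚ} (h : q ∉ closure (Vaux f g r)) :
    ((r:ℝ):EReal) ≤ Haux f g q := by
  apply le_iInf₂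
  intro s hs
  apply EReal.coe_le_coe_iff.2
  have hrs : r ≤ s := by
    by_contra hc
    push_neg at hc
    exact h (closure_mono (Vaux_mono f g hc.le) hs)
  exact_mod_cast hrs

end Aux

/-- Let `f, g : Q → ℝ ∪ {±∞}` be continuous, taking infinite values only on
nowhere dense sets.  Then `Q₀ = {|f| < ∞} ∩ {|g| < ∞}` is open and dense, and
if `Q` is quasi-extremally disconnected compact Hausdorff then there is a unique
continuous `h : Q → ℝ ∪ {±∞}` with `h = f + g` on `Q₀`. -/
theorem stmt_9 {Q : Type*} [TopologicalSpace Q] (f g : Q → EReal)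
    (hf : Continuous f) (hg : Continuous g)
    (hfnd : IsNowhereDense {q | f q = ⊤ ∨ f q = ⊥})
    (hgnd : IsNowhereDense {q | g q = ⊤ ∨ g q = ⊥}) :
    IsOpen ({q | f q ≠ ⊤ ∧ f q ≠ ⊥} ∩ {q | g q ≠ ⊤ ∧ g q ≠ ⊥}) ∧
      Dense ({q | f q ≠ ⊤ ∧ f q ≠ ⊥} ∩ {q | g q ≠ ⊤ ∧ g q ≠ ⊥}) ∧
      (CompactSpace Q → T2Space Q →
        (∀ U : Set Q, IsOpen U → IsFsigma U → IsOpen (closure U)) →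
        ∃! h : Q → EReal, Continuous h ∧
          ∀ q ∈ {q | f q ≠ ⊤ ∧ f q ≠ ⊥} ∩ {q | g q ≠ ⊤ ∧ g q ≠ ⊥},
            h q = f q + g q) := by
  classical
  -- closedness of the bad sets
  have hclosed : ∀ (k : Q → EReal), Continuous k →
      IsClosed {q | k q = ⊤ ∨ k q = ⊥} := by
    intro k hk
    have : {q | k q = ⊤ ∨ k q = ⊥} = k ⁻¹' {⊤, ⊥} := by
      ext q; simp [Set.mem_preimage]
    rw [this]
    exact (Set.toFinite ({⊤, ⊥} : Set EReal)).isClosed.preimage hk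
  have hcompl : ∀ (k : Q → EReal),
      {q | k q ≠ ⊤ ∧ k q ≠ ⊥} = {q | k q = ⊤ ∨ k q = ⊥}ᶜ := by
    intro k; ext q; simp [not_or]
  have hopen : IsOpen ({q | f q ≠ ⊤ ∧ f q ≠ ⊥} ∩ {q | g q ≠ ⊤ ∧ g q ≠ ⊥}) := by
    rw [hcompl f, hcompl g]
    exact ((hclosed f hf).isOpen_compl).inter ((hclosed g hg).isOpen_compl)
  have hdense : Dense ({q | f q ≠ ⊤ ∧ f q ≠ ⊥} ∩ {q | g q ≠ ⊤ ∧ g q ≠ ⊥}) := by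
    rw [hcompl f, hcompl g, ← Set.compl_union]
    rw [← interior_eq_empty_iff_dense_compl]
    have hnd := aux_nd_union hfnd hgnd
    have hcl : IsClosed ({q | f q = ⊤ ∨ f q = ⊥} ∪ {q | g q = ⊤ ∨ g q = ⊥}) :=
      (hclosed f hf).union (hclosed g hg)
    exact hcl.isNowhereDense_iff.1 hnd
  refine ⟨hopen, hdense, ?_⟩
  intro _ _ hqed
  -- the closures of the approximating sets are clopen
  have hclop : ∀ r : ℚ, IsOpen (closure (Vaux f g r)) := fun r =>
    hqed _ (isOpen_Vaux f g hf hg r) (isFsigma_Vaux f g hf hg r)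
  -- continuity of Haux
  have hcont : Continuous (Haux f g) := by
    rw [continuous_iff_coinduced_le,
        OrderTopology.topology_eq_generate_intervals (α := EReal), Preorder.topology,
        TopologicalSpace.le_generateFrom_iff_subset_isOpen]
    rintro s ⟨a, rfl | rfl⟩ <;> rw [Set.mem_setOf_eq, isOpen_coinduced]
    · -- Ioi
      have : Haux f g ⁻¹' Set.Ioi a =
          ⋃ (r : ℚ) (_ : a < ((r:ℝ):EReal)), (closure (Vaux f g r))ᶜ := by
        ext q
        simp only [Set.mem_preimage, Set.mem_Ioi, Set.mem_iUnion, Set.mem_compl_iff]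
        constructor
        · intro hq
          obtain ⟨x, hx1, hx2⟩ := EReal.exists_rat_btwn_of_lt hq
          refine ⟨x, hx1, fun hmem => ?_⟩
          exact absurd (Haux_le_of_mem f g hmem) (not_le.2 hx2)
        · rintro ⟨r, hr, hnot⟩
          exact lt_of_lt_of_le hr (le_Haux_of_not_mem f g hnot)
      rw [this]
      exact isOpen_iUnion fun r => isOpen_iUnion fun _ => (isClosed_closure).isOpen_compl
    · -- Iio
      have : Haux f g ⁻¹' Set.Iio a =
          ⋃ (r : ℚ) (_ : ((r:ℝ):EReal) < a), closure (Vaux f g r) := by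
        ext q
        simp only [Set.mem_preimage, Set.mem_Iio, Set.mem_iUnion]
        rw [Haux_lt_iff]
        constructor
        · rintro ⟨r, h1, h2⟩; exact ⟨r, h1, h2⟩
        · rintro ⟨r, h1, h2⟩; exact ⟨r, h1, h2⟩
      rw [this]
      exact isOpen_iUnion fun r => isOpen_iUnion fun _ => hclop r
  -- value on Q₀
  have hval : ∀ q ∈ ({q | f q ≠ ⊤ ∧ f q ≠ ⊥} ∩ {q | g q ≠ ⊤ ∧ g q ≠ ⊥}),
      Haux f g q = f q + g q := by
    rintro q ⟨⟨hft, hfb⟩, ⟨hgt, hgb⟩⟩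
    set x : ℝ := (f q).toReal with hxdef
    set y : ℝ := (g q).toReal with hydef
    have hx : ((x : ℝ) : EReal) = f q := EReal.coe_toReal hft hfb
    have hy : ((y : ℝ) : EReal) = g q := EReal.coe_toReal hgt hgb
    rw [← hx, ← hy, ← EReal.coe_add]
    apply le_antisymm
    · -- Haux ≤ x + y
      by_contra hc
      push_neg at hc
      obtain ⟨r, hr1, hr2⟩ := EReal.exists_rat_btwn_of_lt hc
      have hxyr : x + y < (r : ℝ) := EReal.coe_lt_coe_iff.1 hr1
      -- q ∈ Vaux f g r
      have hmem : q ∈ Vaux f g r := by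
        rw [mem_Vaux]
        obtain ⟨a, ha1, ha2⟩ := exists_rat_btwn (show x < x + ((r:ℝ) - (x+y))/2 by linarith)
        obtain ⟨b, hb1, hb2⟩ := exists_rat_btwn (show y < y + ((r:ℝ) - (x+y))/2 by linarith)
        refine ⟨a, b, ?_, ?_, ?_⟩
        · have : (a:ℝ) + (b:ℝ) < (r:ℝ) := by linarith
          exact_mod_cast this
        · rw [← hx]; exact EReal.coe_lt_coe_iff.2 ha1
        · rw [← hy]; exact EReal.coe_lt_coe_iff.2 hb1
      exact absurd (Haux_le_of_mem f g (subset_closure hmem)) (not_le.2 hr2)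
    · -- x + y ≤ Haux
      by_contra hc
      push_neg at hc
      obtain ⟨r, hr1, hr2⟩ := EReal.exists_rat_btwn_of_lt hc
      obtain ⟨r', hr'1, hr'2⟩ := (Haux_lt_iff f g).1 hr1
      have hr'xy : (r':ℝ) < x + y := by
        have h1 : ((r':ℝ):EReal) < ((x+y : ℝ):EReal) := lt_trans hr'1 hr2
        exact EReal.coe_lt_coe_iff.1 h1
      -- show q ∉ closure (Vaux f g r')
      have hnot : q ∉ closure (Vaux f g r') := by
        set δ : ℝ := (x + y - (r':ℝ))/2 with hδ
        have hδpos : 0 < δ := by rw [hδ]; linarith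
        obtain ⟨a', ha'1, ha'2⟩ := exists_rat_btwn (show x - δ < x by linarith)
        obtain ⟨b', hb'1, hb'2⟩ := exists_rat_btwn (show y - δ < y by linarith)
        intro hmem
        rw [mem_closure_iff] at hmem
        have hN : IsOpen ({p | ((a':ℝ):EReal) < f p} ∩ {p | ((b':ℝ):EReal) < g p}) :=
          (isOpen_Ioi.preimage hf).inter (isOpen_Ioi.preimage hg)
        have hqN : q ∈ {p | ((a':ℝ):EReal) < f p} ∩ {p | ((b':ℝ):EReal) < g p} := by
          constructor
          · rw [Set.mem_setOf_eq, ← hx]; exact EReal.coe_lt_coe_iff.2 ha'2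
          · rw [Set.mem_setOf_eq, ← hy]; exact EReal.coe_lt_coe_iff.2 hb'2
        obtain ⟨p, hp1, hp2⟩ := hmem _ hN hqN
        rw [mem_Vaux] at hp2
        obtain ⟨a, b, hab, hpa, hpb⟩ := hp2
        have haa : (a':ℝ) < a := EReal.coe_lt_coe_iff.1 (lt_trans hp1.1 hpa)
        have hbb : (b':ℝ) < b := EReal.coe_lt_coe_iff.1 (lt_trans hp1.2 hpb)
        have habR : (a:ℝ) + (b:ℝ) < (r':ℝ) := by exact_mod_cast hab
        linarith
      exact hnot hr'2
  refine ⟨Haux f g, ⟨hcont, hval⟩, ?_⟩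
  intro h' ⟨h'cont, h'val⟩
  apply Continuous.ext_on hdense h'cont hcont
  intro q hq
  rw [h'val q hq, hval q hq]
end

section
/- Let Q be an extremally disconnected compact Hausdorff space. Then C∞(Q,ℝ), the space of continuous extended-real-valued functions taking infinite values only on nowhere dense sets, with pointwise order, is a Dedekind complete vector lattice (every nonempty order-bounded subset has a supremum). -/
open Set Filter Topology

/-- `C∞(Q, ℝ)`: continuous extended-real-valued functions on `Q` taking infinite
values only on a nowhere dense set. -/
def Cinf (Q : Type*) [TopologicalSpace Q] : Type _ :=
  {f : C(Q, EReal) // IsNowhereDense {q | f q = ⊤ ∨ f q = ⊥}}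

/-- The pointwise order on `C∞(Q, ℝ)`. -/
noncomputable instance Cinf.instPartialOrder (Q : Type*) [TopologicalSpace Q] :
    PartialOrder (Cinf Q) :=
  PartialOrder.lift (fun f => (f.1 : Q → EReal))
    (fun f g h => Subtype.ext (ContinuousMap.ext fun q => congrFun h q))


section aux

variable {X : Type*} [TopologicalSpace X]

lemma myNowhereDense_mono {s t : Set X} (h : s ⊆ t) (ht : IsNowhereDense t) :
    IsNowhereDense s := by
  have : interior (closure s) ⊆ interior (closure t) :=
    interior_mono (closure_mono h)
  rw [IsNowhereDense] at ht ⊢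
  exact subset_eq_empty (ht ▸ this) rfl

lemma myNowhereDense_union {s t : Set X} (hs : IsNowhereDense s) (ht : IsNowhereDense t) :
    IsNowhereDense (s ∪ t) := by
  rw [IsNowhereDense, closure_union]
  set U := interior (closure s ∪ closure t) with hU
  have h1 : U \ closure s ⊆ interior (closure t) := by
    apply interior_maximal
    · intro x hx
      rcases interior_subset hx.1 with h | h
      · exact absurd h hx.2
      · exact h
    · exact isOpen_interior.sdiff isClosed_closure
  rw [ht] at h1
  have h2 : U ⊆ closure s := fun x hx => by
    by_contra hc
    exact absurd (h1 ⟨hx, hc⟩) (notMem_empty x)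
  have h3 : U ⊆ interior (closure s) := interior_maximal h2 isOpen_interior
  rw [hs] at h3
  exact subset_eq_empty h3 rfl

end aux

section main

variable {Q : Type*} [TopologicalSpace Q] [ExtremallyDisconnected Q]

/-- pointwise sup -/
private noncomputable def ptSup (S : Set (Cinf Q)) : Q → EReal := fun q => ⨆ f ∈ S, f.1 q

/-- usc envelope of the pointwise sup -/
private noncomputable def env (S : Set (Cinf Q)) : Q → EReal :=
  fun q => ⨅ U ∈ 𝓝 q, ⨆ p ∈ U, ptSup S p

lemma ptSup_lsc (S : Set (Cinf Q)) : LowerSemicontinuous (ptSup S) := by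
  rw [lowerSemicontinuous_iff_isOpen_preimage]
  intro a
  have : ptSup S ⁻¹' Ioi a = ⋃ f ∈ S, (f.1 : Q → EReal) ⁻¹' Ioi a := by
    ext q
    simp only [mem_preimage, mem_Ioi, mem_iUnion, ptSup, lt_iSup_iff, exists_prop]
  rw [this]
  exact isOpen_biUnion fun f _ => (isOpen_Ioi).preimage f.1.continuous

lemma le_env (S : Set (Cinf Q)) (q : Q) : ptSup S q ≤ env S q :=
  le_iInf₂ fun U hU => le_iSup₂ (f := fun p _ => ptSup S p) q (mem_of_mem_nhds hU)

lemma env_le_of_cont {S : Set (Cinf Q)} {c : Q → EReal} (hc : Continuous c)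
    (h : ∀ q, ptSup S q ≤ c q) (q : Q) : env S q ≤ c q := by
  refine le_of_forall_gt_imp_ge_of_dense fun a ha => ?_
  have hU : c ⁻¹' Iio a ∈ 𝓝 q :=
    ((isOpen_Iio).preimage hc).mem_nhds (by simpa using ha)
  calc env S q ≤ ⨆ p ∈ c ⁻¹' Iio a, ptSup S p := iInf₂_le _ hU
    _ ≤ a := iSup₂_le fun p hp => (h p).trans (le_of_lt hp)

lemma env_usc (S : Set (Cinf Q)) : UpperSemicontinuous (env S) := by
  rw [upperSemicontinuous_iff_isOpen_preimage]
  intro a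
  rw [isOpen_iff_mem_nhds]
  intro q hq
  simp only [mem_preimage, mem_Iio, env] at hq
  obtain ⟨U, hU, hUa⟩ : ∃ U ∈ 𝓝 q, (⨆ p ∈ U, ptSup S p) < a := by
    by_contra hc
    push_neg at hc
    exact absurd (le_iInf₂ hc) (not_le_of_gt hq)
  filter_upwards [interior_mem_nhds.2 hU] with p hp
  have : env S p ≤ ⨆ r ∈ interior U, ptSup S r :=
    iInf₂_le _ (isOpen_interior.mem_nhds hp)
  refine lt_of_le_of_lt (this.trans ?_) hUa
  exact iSup₂_le fun r hr => le_iSup₂ (f := fun p _ => ptSup S p) r (interior_subset hr)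

lemma env_lsc (S : Set (Cinf Q)) : LowerSemicontinuous (env S) := by
  rw [lowerSemicontinuous_iff_isOpen_preimage]
  intro a
  have key : env S ⁻¹' Ioi a = ⋃ a' ∈ Ioi a, closure (ptSup S ⁻¹' Ioi a') := by
    ext q
    simp only [mem_preimage, mem_Ioi, mem_iUnion, exists_prop]
    constructor
    · intro hq
      obtain ⟨a', ha1, ha2⟩ := exists_between hq
      refine ⟨a', ha1, ?_⟩
      rw [mem_closure_iff_nhds]
      intro U hU
      have h1 : a' < ⨆ p ∈ U, ptSup S p := lt_of_lt_of_le ha2 (iInf₂_le _ hU)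
      obtain ⟨p, hp1, hp2⟩ := by
        simpa only [lt_iSup_iff, exists_prop] using h1
      exact ⟨p, hp1, hp2⟩
    · rintro ⟨a', ha1, ha2⟩
      have : a' ≤ env S q := by
        refine le_iInf₂ fun U hU => ?_
        rw [mem_closure_iff_nhds] at ha2
        obtain ⟨p, hp1, hp2⟩ := ha2 U hU
        exact le_trans (le_of_lt hp2) (le_iSup₂ (f := fun p _ => ptSup S p) p hp1)
      exact lt_of_lt_of_le ha1 this
  rw [key]
  exact isOpen_biUnion fun a' _ =>
    ExtremallyDisconnected.open_closure _ ((ptSup_lsc S).isOpen_preimage a')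

lemma env_continuous (S : Set (Cinf Q)) : Continuous (env S) :=
  continuous_iff_lower_upperSemicontinuous.2 ⟨env_lsc S, env_usc S⟩

end main

/-- For an extremally disconnected compact Hausdorff space `Q`, `C∞(Q, ℝ)` with
the pointwise order is Dedekind complete: every nonempty order-bounded subset
has a least upper bound. -/
theorem stmt_10 (Q : Type*) [TopologicalSpace Q] [CompactSpace Q] [T2Space Q]
    [ExtremallyDisconnected Q] :
    ∀ S : Set (Cinf Q), S.Nonempty → BddAbove S → ∃ s, IsLUB S s := by
  intro S ⟨f₀, hf₀⟩ ⟨b, hb⟩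
  -- the candidate sup
  have hle : ∀ f ∈ S, ∀ q, f.1 q ≤ env S q := fun f hf q =>
    le_trans (le_iSup₂ (f := fun g _ => g.1 q) f hf) (le_env S q)
  have hub : ∀ c : Cinf Q, c ∈ upperBounds S → ∀ q, env S q ≤ c.1 q := by
    intro c hc
    exact env_le_of_cont c.1.continuous fun q =>
      iSup₂_le fun f hf => hc hf q
  have hsb : ∀ q, env S q ≤ b.1 q := hub b hb
  have hsf₀ : ∀ q, f₀.1 q ≤ env S q := hle f₀ hf₀
  refine ⟨⟨⟨env S, env_continuous S⟩, ?_⟩, ?_, ?_⟩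
  · -- nowhere dense infinity set
    apply myNowhereDense_mono (t := {q | b.1 q = ⊤ ∨ b.1 q = ⊥} ∪
      {q | f₀.1 q = ⊤ ∨ f₀.1 q = ⊥})
    · intro q hq
      simp only [ContinuousMap.coe_mk, mem_setOf_eq] at hq
      rcases hq with h | h
      · left; left
        have := hsb q
        rw [h] at this
        exact top_le_iff.1 this
      · right; right
        have := hsf₀ q
        rw [h] at this
        exact le_bot_iff.1 this
    · exact myNowhereDense_union b.2 f₀.2
  · intro f hf q
    exact hle f hf q
  · intro c hc q
    exact hub c hc q
end

section
/- For an extremally disconnected compact Hausdorff space Q, the f-algebra C∞(Q,ℝ) is faithful: if f·g = 0 then |f| ⊓ |g| = 0. -/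
/-- For an extremally disconnected compact Hausdorff space `Q`, the `f`-algebra
`C∞(Q, ℝ)` is faithful: if the product `f·g` (defined pointwise on the dense
open set where both factors are finite) vanishes, then `|f| ⊓ |g| = 0`. -/
theorem stmt_12 (Q : Type*) [TopologicalSpace Q] [CompactSpace Q] [T2Space Q]
    [ExtremallyDisconnected Q] (f g : Cinf Q)
    (hfg : ∀ q, (f.1 q ≠ ⊤ ∧ f.1 q ≠ ⊥) → (g.1 q ≠ ⊤ ∧ g.1 q ≠ ⊥) →
      f.1 q * g.1 q = 0) :
    ∀ q, min (max (f.1 q) (-f.1 q)) (max (g.1 q) (-g.1 q)) = 0 := by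
  have habs : ∀ a : EReal, (0 : EReal) ≤ max a (-a) := by
    intro a
    rcases le_total 0 a with h | h
    · exact le_max_of_le_left h
    · exact le_max_of_le_right (by simpa using EReal.neg_le_neg_iff.2 h)
  -- the dense set where both functions are finite
  set S : Set Q := (closure {q | f.1 q = ⊤ ∨ f.1 q = ⊥})ᶜ ∩
      (closure {q | g.1 q = ⊤ ∨ g.1 q = ⊥})ᶜ with hS
  have hdense : Dense S := by
    have h1 : Dense (closure {q | f.1 q = ⊤ ∨ f.1 q = ⊥})ᶜ :=
      interior_eq_empty_iff_dense_compl.1 f.2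
    have h2 : Dense (closure {q | g.1 q = ⊤ ∨ g.1 q = ⊥})ᶜ :=
      interior_eq_empty_iff_dense_compl.1 g.2
    exact h1.inter_of_isOpen_left h2 isClosed_closure.isOpen_compl
  have hcont : Continuous fun q =>
      min (max (f.1 q) (-f.1 q)) (max (g.1 q) (-g.1 q)) := by
    have hf := f.1.continuous
    have hg := g.1.continuous
    exact (hf.max hf.neg).min (hg.max hg.neg)
  have key : ∀ q ∈ S, min (max (f.1 q) (-f.1 q)) (max (g.1 q) (-g.1 q)) = 0 := by
    intro q hq
    have hqf : ¬(f.1 q = ⊤ ∨ f.1 q = ⊥) := fun h => hq.1 (subset_closure h)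
    have hqg : ¬(g.1 q = ⊤ ∨ g.1 q = ⊥) := fun h => hq.2 (subset_closure h)
    push_neg at hqf hqg
    have hmul := hfg q hqf hqg
    lift f.1 q to ℝ using hqf with r hr
    lift g.1 q to ℝ using hqg with s hs
    have : (r : EReal) * (s : EReal) = ((r * s : ℝ) : EReal) := by
      exact_mod_cast rfl
    rw [this] at hmul
    have hrs : r * s = 0 := by exact_mod_cast hmul
    rcases mul_eq_zero.1 hrs with h | h
    · subst h
      simp only [EReal.coe_zero, neg_zero, max_self]
      exact min_eq_left (habs _)
    · subst h
      simp only [EReal.coe_zero, neg_zero, max_self]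
      exact min_eq_right (habs _)
  intro q
  have := Continuous.ext_on hdense hcont continuous_const key
  exact congrFun this q
end
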